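/- Let l, m, n, a, b, c, d be natural numbers with b + c + d = l, a + c + d = m, and a + b + d = n. Consider set partitions of the three-fold disjoint union Fin l ⊕ Fin m ⊕ Fin n all of whose blocks have one of the following forms: a two-element block meeting the second and third summands, a two-element block meeting the first and third summands, a two-element block meeting the first and second summands, or a three-element block meeting all three summands; and which have exactly a blocks of the first form, b of the second form, c of the third form, and d of the fourth form. The number of such set partitions equals l!·m!·n!/(a!·b!·c!·d!). (The counting claim established in the proofs of Lemma 3.11 and Theorem 3.12 of the paper, where this set is denoted Ω^d_{l,m,n}.) -/

import Mathlib

noncomputable section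

/-- A two-element block meeting the second and third summands of `Fin l ⊕ Fin m ⊕ Fin n`. -/
def BlockA (l m n : ℕ) (B : Set (Fin l ⊕ Fin m ⊕ Fin n)) : Prop :=
  ∃ (x : Fin m) (y : Fin n), B = {Sum.inr (Sum.inl x), Sum.inr (Sum.inr y)}

/-- A two-element block meeting the first and third summands. -/
def BlockB (l m n : ℕ) (B : Set (Fin l ⊕ Fin m ⊕ Fin n)) : Prop :=
  ∃ (x : Fin l) (y : Fin n), B = {Sum.inl x, Sum.inr (Sum.inr y)}

/-- A two-element block meeting the first and second summands. -/
def BlockC (l m n : ℕ) (B : Set (Fin l ⊕ Fin m ⊕ Fin n)) : Prop :=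
  ∃ (x : Fin l) (y : Fin m), B = {Sum.inl x, Sum.inr (Sum.inl y)}

/-- A three-element block meeting all three summands. -/
def BlockD (l m n : ℕ) (B : Set (Fin l ⊕ Fin m ⊕ Fin n)) : Prop :=
  ∃ (x : Fin l) (y : Fin m) (z : Fin n),
    B = {Sum.inl x, Sum.inr (Sum.inl y), Sum.inr (Sum.inr z)}

namespace Stmt18Aux

variable {l m n a b c d : ℕ}

abbrev Om (l m n : ℕ) := Fin l ⊕ Fin m ⊕ Fin n
abbrev Lab (a b c d : ℕ) := Fin a ⊕ (Fin b ⊕ (Fin c ⊕ Fin d))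
abbrev EE (l m n a b c d : ℕ) :=
  (Fin l ≃ (Fin b ⊕ (Fin c ⊕ Fin d))) × (Fin m ≃ (Fin a ⊕ (Fin c ⊕ Fin d))) ×
    (Fin n ≃ (Fin a ⊕ (Fin b ⊕ Fin d)))

def ja (i : Fin a) : Lab a b c d := .inl i
def jb (i : Fin b) : Lab a b c d := .inr (.inl i)
def jc (i : Fin c) : Lab a b c d := .inr (.inr (.inl i))
def jd (i : Fin d) : Lab a b c d := .inr (.inr (.inr i))

def lab (e : EE l m n a b c d) : Om l m n → Lab a b c d :=
  Sum.elim (fun x => Sum.elim jb (Sum.elim jc jd) (e.1 x))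
    (Sum.elim (fun y => Sum.elim ja (Sum.elim jc jd) (e.2.1 y))
              (fun z => Sum.elim ja (Sum.elim jb jd) (e.2.2 z)))

variable (e : EE l m n a b c d)

lemma lab_inl (x : Fin l) :
    lab e (.inl x) = Sum.elim jb (Sum.elim jc jd) (e.1 x) := rfl
lemma lab_inm (y : Fin m) :
    lab e (.inr (.inl y)) = Sum.elim ja (Sum.elim jc jd) (e.2.1 y) := rfl
lemma lab_inn (z : Fin n) :
    lab e (.inr (.inr z)) = Sum.elim ja (Sum.elim jb jd) (e.2.2 z) := rfl

lemma fiber_ja (i : Fin a) :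
    lab e ⁻¹' {ja i} =
      {.inr (.inl (e.2.1.symm (.inl i))), .inr (.inr (e.2.2.symm (.inl i)))} := by
  ext u
  rcases u with x | y | z
  · rcases h : e.1 x with j | j | j <;>
      simp [lab_inl, h, ja, jb, jc, jd]
  · rcases h : e.2.1 y with j | j | j <;>
      simp [lab_inm, h, ja, jb, jc, jd, Equiv.eq_symm_apply, h]
  · rcases h : e.2.2 z with j | j | j <;>
      simp [lab_inn, h, ja, jb, jc, jd, Equiv.eq_symm_apply, h]

lemma fiber_jb (i : Fin b) :
    lab e ⁻¹' {(jb i : Lab a b c d)} =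
      {.inl (e.1.symm (.inl i)), .inr (.inr (e.2.2.symm (.inr (.inl i))))} := by
  ext u
  rcases u with x | y | z
  · rcases h : e.1 x with j | j | j <;>
      simp [lab_inl, h, ja, jb, jc, jd, Equiv.eq_symm_apply, h]
  · rcases h : e.2.1 y with j | j | j <;>
      simp [lab_inm, h, ja, jb, jc, jd, Equiv.eq_symm_apply, h]
  · rcases h : e.2.2 z with j | j | j <;>
      simp [lab_inn, h, ja, jb, jc, jd, Equiv.eq_symm_apply, h]

lemma fiber_jc (i : Fin c) :
    lab e ⁻¹' {(jc i : Lab a b c d)} =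
      {.inl (e.1.symm (.inr (.inl i))), .inr (.inl (e.2.1.symm (.inr (.inl i))))} := by
  ext u
  rcases u with x | y | z
  · rcases h : e.1 x with j | j | j <;>
      simp [lab_inl, h, ja, jb, jc, jd, Equiv.eq_symm_apply, h]
  · rcases h : e.2.1 y with j | j | j <;>
      simp [lab_inm, h, ja, jb, jc, jd, Equiv.eq_symm_apply, h]
  · rcases h : e.2.2 z with j | j | j <;>
      simp [lab_inn, h, ja, jb, jc, jd, Equiv.eq_symm_apply, h]

lemma fiber_jd (i : Fin d) :
    lab e ⁻¹' {(jd i : Lab a b c d)} =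
      {.inl (e.1.symm (.inr (.inr i))), .inr (.inl (e.2.1.symm (.inr (.inr i)))),
        .inr (.inr (e.2.2.symm (.inr (.inr i))))} := by
  ext u
  rcases u with x | y | z
  · rcases h : e.1 x with j | j | j <;>
      simp [lab_inl, h, ja, jb, jc, jd, Equiv.eq_symm_apply, h]
  · rcases h : e.2.1 y with j | j | j <;>
      simp [lab_inm, h, ja, jb, jc, jd, Equiv.eq_symm_apply, h]
  · rcases h : e.2.2 z with j | j | j <;>
      simp [lab_inn, h, ja, jb, jc, jd, Equiv.eq_symm_apply, h]

lemma lab_surjective : Function.Surjective (lab e) := by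
  rintro (i | i | i | i)
  · exact ⟨.inr (.inl (e.2.1.symm (.inl i))), by simp [lab_inm, ja]⟩
  · exact ⟨.inl (e.1.symm (.inl i)), by simp [lab_inl, jb]⟩
  · exact ⟨.inl (e.1.symm (.inr (.inl i))), by simp [lab_inl, jc]⟩
  · exact ⟨.inl (e.1.symm (.inr (.inr i))), by simp [lab_inl, jd]⟩

lemma mem_classes_ker_iff {α β : Type*} {f : α → β} (hf : Function.Surjective f)
    {S : Set α} : S ∈ (Setoid.ker f).classes ↔ ∃ v, S = f ⁻¹' {v} := by
  constructor
  · rintro ⟨y, rfl⟩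
    exact ⟨f y, by ext u; simp [Setoid.ker_def]⟩
  · rintro ⟨v, rfl⟩
    obtain ⟨y, rfl⟩ := hf v
    exact ⟨y, by ext u; simp [Setoid.ker_def]⟩

lemma preimage_singleton_inj {α β : Type*} {f : α → β} (hf : Function.Surjective f)
    {v w : β} (h : f ⁻¹' {v} = f ⁻¹' {w}) : v = w := by
  obtain ⟨u, rfl⟩ := hf v
  have : u ∈ f ⁻¹' {f u} := rfl
  rw [h] at this
  exact this

lemma ncard_range_aux {α : Type*} {k : ℕ} {f : Fin k → Set α}
    (hf : Function.Injective f) : (Set.range f).ncard = k := by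
  rw [← Set.image_univ, Set.ncard_image_of_injective _ hf, Set.ncard_univ,
    Nat.card_eq_fintype_card, Fintype.card_fin]

lemma blockA_not_inl {S : Set (Om l m n)} (h : BlockA l m n S) (x : Fin l) :
    Sum.inl x ∉ S := by
  obtain ⟨y, z, rfl⟩ := h; simp

lemma blockB_not_inm {S : Set (Om l m n)} (h : BlockB l m n S) (y : Fin m) :
    Sum.inr (Sum.inl y) ∉ S := by
  obtain ⟨x, z, rfl⟩ := h; simp

lemma blockC_not_inn {S : Set (Om l m n)} (h : BlockC l m n S) (z : Fin n) :
    Sum.inr (Sum.inr z) ∉ S := by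
  obtain ⟨x, y, rfl⟩ := h; simp

lemma countA : {B | B ∈ (Setoid.ker (lab e)).classes ∧ BlockA l m n B}.ncard = a := by
  have hrange : {B | B ∈ (Setoid.ker (lab e)).classes ∧ BlockA l m n B}
      = Set.range (fun i : Fin a => lab e ⁻¹' {ja i}) := by
    ext S
    constructor
    · rintro ⟨hS, hA⟩
      obtain ⟨v, rfl⟩ := (mem_classes_ker_iff (lab_surjective e)).mp hS
      rcases v with i | i | i | i
      · exact ⟨i, rfl⟩
      · exact absurd (show (Sum.inl (e.1.symm (Sum.inl i)) : Om l m n) ∈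
            lab e ⁻¹' {(Sum.inr (Sum.inl i) : Lab a b c d)} by
            simp [Set.mem_preimage, lab_inl, jb]) (blockA_not_inl hA _)
      · exact absurd (show (Sum.inl (e.1.symm (Sum.inr (Sum.inl i))) : Om l m n) ∈
            lab e ⁻¹' {(Sum.inr (Sum.inr (Sum.inl i)) : Lab a b c d)} by
            simp [Set.mem_preimage, lab_inl, jc]) (blockA_not_inl hA _)
      · exact absurd (show (Sum.inl (e.1.symm (Sum.inr (Sum.inr i))) : Om l m n) ∈
            lab e ⁻¹' {(Sum.inr (Sum.inr (Sum.inr i)) : Lab a b c d)} by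
            simp [Set.mem_preimage, lab_inl, jd]) (blockA_not_inl hA _)
    · rintro ⟨i, rfl⟩
      refine ⟨⟨Sum.inr (Sum.inl (e.2.1.symm (Sum.inl i))), ?_⟩, ⟨_, _, fiber_ja e i⟩⟩
      ext u
      simp [Setoid.ker_def, lab_inm, ja]
  rw [hrange, ncard_range_aux]
  intro i i' h
  have := preimage_singleton_inj (lab_surjective e) h
  simpa [ja] using this

lemma labL_ne_ja (x : Fin l) (i : Fin a) : lab e (.inl x) ≠ ja i := by
  rcases h : e.1 x with j | j | j <;> simp [lab_inl, h, ja, jb, jc, jd]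

lemma labM_ne_jb (y : Fin m) (i : Fin b) : lab e (.inr (.inl y)) ≠ jb i := by
  rcases h : e.2.1 y with j | j | j <;> simp [lab_inm, h, ja, jb, jc, jd]

lemma labN_ne_jc (z : Fin n) (i : Fin c) : lab e (.inr (.inr z)) ≠ jc i := by
  rcases h : e.2.2 z with j | j | j <;> simp [lab_inn, h, ja, jb, jc, jd]

lemma blockB_mem_inl {S : Set (Om l m n)} (h : BlockB l m n S) :
    ∃ x, Sum.inl x ∈ S := by obtain ⟨x, z, rfl⟩ := h; exact ⟨x, by simp⟩

lemma blockB_mem_inn {S : Set (Om l m n)} (h : BlockB l m n S) :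
    ∃ z, Sum.inr (Sum.inr z) ∈ S := by obtain ⟨x, z, rfl⟩ := h; exact ⟨z, by simp⟩

lemma blockC_mem_inl {S : Set (Om l m n)} (h : BlockC l m n S) :
    ∃ x, Sum.inl x ∈ S := by obtain ⟨x, y, rfl⟩ := h; exact ⟨x, by simp⟩

lemma blockC_mem_inm {S : Set (Om l m n)} (h : BlockC l m n S) :
    ∃ y, Sum.inr (Sum.inl y) ∈ S := by obtain ⟨x, y, rfl⟩ := h; exact ⟨y, by simp⟩

lemma blockD_mem_inl {S : Set (Om l m n)} (h : BlockD l m n S) :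
    ∃ x, Sum.inl x ∈ S := by obtain ⟨x, y, z, rfl⟩ := h; exact ⟨x, by simp⟩

lemma blockD_mem_inm {S : Set (Om l m n)} (h : BlockD l m n S) :
    ∃ y, Sum.inr (Sum.inl y) ∈ S := by obtain ⟨x, y, z, rfl⟩ := h; exact ⟨y, by simp⟩

lemma blockD_mem_inn {S : Set (Om l m n)} (h : BlockD l m n S) :
    ∃ z, Sum.inr (Sum.inr z) ∈ S := by obtain ⟨x, y, z, rfl⟩ := h; exact ⟨z, by simp⟩

lemma blockA_mem_inm {S : Set (Om l m n)} (h : BlockA l m n S) :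
    ∃ y, Sum.inr (Sum.inl y) ∈ S := by obtain ⟨y, z, rfl⟩ := h; exact ⟨y, by simp⟩

lemma blockA_mem_inn {S : Set (Om l m n)} (h : BlockA l m n S) :
    ∃ z, Sum.inr (Sum.inr z) ∈ S := by obtain ⟨y, z, rfl⟩ := h; exact ⟨z, by simp⟩

lemma ker_blocks :
    ∀ B ∈ (Setoid.ker (lab e)).classes,
      BlockA l m n B ∨ BlockB l m n B ∨ BlockC l m n B ∨ BlockD l m n B := by
  intro B hB
  obtain ⟨v, rfl⟩ := (mem_classes_ker_iff (lab_surjective e)).mp hB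
  rcases v with i | i | i | i
  · exact Or.inl ⟨_, _, fiber_ja e i⟩
  · exact Or.inr (Or.inl ⟨_, _, fiber_jb e i⟩)
  · exact Or.inr (Or.inr (Or.inl ⟨_, _, fiber_jc e i⟩))
  · exact Or.inr (Or.inr (Or.inr ⟨_, _, _, fiber_jd e i⟩))

lemma countB : {B | B ∈ (Setoid.ker (lab e)).classes ∧ BlockB l m n B}.ncard = b := by
  have hrange : {B | B ∈ (Setoid.ker (lab e)).classes ∧ BlockB l m n B}
      = Set.range (fun i : Fin b => lab e ⁻¹' {jb i}) := by
    ext S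
    constructor
    · rintro ⟨hS, hB⟩
      obtain ⟨v, rfl⟩ := (mem_classes_ker_iff (lab_surjective e)).mp hS
      rcases v with i | i | i | i
      · obtain ⟨x, hx⟩ := blockB_mem_inl hB
        exact absurd hx (labL_ne_ja e x i)
      · exact ⟨i, rfl⟩
      · obtain ⟨z, hz⟩ := blockB_mem_inn hB
        exact absurd hz (labN_ne_jc e z i)
      · exact absurd (show (Sum.inr (Sum.inl (e.2.1.symm (Sum.inr (Sum.inr i)))) : Om l m n) ∈
            lab e ⁻¹' {(Sum.inr (Sum.inr (Sum.inr i)) : Lab a b c d)} by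
            simp [Set.mem_preimage, lab_inm, jd]) (blockB_not_inm hB _)
    · rintro ⟨i, rfl⟩
      refine ⟨⟨Sum.inl (e.1.symm (Sum.inl i)), ?_⟩, ⟨_, _, fiber_jb e i⟩⟩
      ext u
      simp [Setoid.ker_def, lab_inl, jb]
  rw [hrange, ncard_range_aux]
  intro i i' h
  have := preimage_singleton_inj (lab_surjective e) h
  simpa [jb] using this

lemma countC : {B | B ∈ (Setoid.ker (lab e)).classes ∧ BlockC l m n B}.ncard = c := by
  have hrange : {B | B ∈ (Setoid.ker (lab e)).classes ∧ BlockC l m n B}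
      = Set.range (fun i : Fin c => lab e ⁻¹' {jc i}) := by
    ext S
    constructor
    · rintro ⟨hS, hC⟩
      obtain ⟨v, rfl⟩ := (mem_classes_ker_iff (lab_surjective e)).mp hS
      rcases v with i | i | i | i
      · obtain ⟨x, hx⟩ := blockC_mem_inl hC
        exact absurd hx (labL_ne_ja e x i)
      · obtain ⟨y, hy⟩ := blockC_mem_inm hC
        exact absurd hy (labM_ne_jb e y i)
      · exact ⟨i, rfl⟩
      · exact absurd (show (Sum.inr (Sum.inr (e.2.2.symm (Sum.inr (Sum.inr i)))) : Om l m n) ∈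
            lab e ⁻¹' {(Sum.inr (Sum.inr (Sum.inr i)) : Lab a b c d)} by
            simp [Set.mem_preimage, lab_inn, jd]) (blockC_not_inn hC _)
    · rintro ⟨i, rfl⟩
      refine ⟨⟨Sum.inl (e.1.symm (Sum.inr (Sum.inl i))), ?_⟩, ⟨_, _, fiber_jc e i⟩⟩
      ext u
      simp [Setoid.ker_def, lab_inl, jc]
  rw [hrange, ncard_range_aux]
  intro i i' h
  have := preimage_singleton_inj (lab_surjective e) h
  simpa [jc] using this

lemma countD : {B | B ∈ (Setoid.ker (lab e)).classes ∧ BlockD l m n B}.ncard = d := by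
  have hrange : {B | B ∈ (Setoid.ker (lab e)).classes ∧ BlockD l m n B}
      = Set.range (fun i : Fin d => lab e ⁻¹' {jd i}) := by
    ext S
    constructor
    · rintro ⟨hS, hD⟩
      obtain ⟨v, rfl⟩ := (mem_classes_ker_iff (lab_surjective e)).mp hS
      rcases v with i | i | i | i
      · obtain ⟨x, hx⟩ := blockD_mem_inl hD
        exact absurd hx (labL_ne_ja e x i)
      · obtain ⟨y, hy⟩ := blockD_mem_inm hD
        exact absurd hy (labM_ne_jb e y i)
      · obtain ⟨z, hz⟩ := blockD_mem_inn hD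
        exact absurd hz (labN_ne_jc e z i)
      · exact ⟨i, rfl⟩
    · rintro ⟨i, rfl⟩
      refine ⟨⟨Sum.inl (e.1.symm (Sum.inr (Sum.inr i))), ?_⟩, ⟨_, _, _, fiber_jd e i⟩⟩
      ext u
      simp [Setoid.ker_def, lab_inl, jd]
  rw [hrange, ncard_range_aux]
  intro i i' h
  have := preimage_singleton_inj (lab_surjective e) h
  simpa [jd] using this

def encL : (Fin b ⊕ (Fin c ⊕ Fin d)) → Lab a b c d := Sum.elim jb (Sum.elim jc jd)
def encM : (Fin a ⊕ (Fin c ⊕ Fin d)) → Lab a b c d := Sum.elim ja (Sum.elim jc jd)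
def encN : (Fin a ⊕ (Fin b ⊕ Fin d)) → Lab a b c d := Sum.elim ja (Sum.elim jb jd)

lemma lab_inl' (x : Fin l) : lab e (.inl x) = encL (e.1 x) := rfl
lemma lab_inm' (y : Fin m) : lab e (.inr (.inl y)) = encM (e.2.1 y) := rfl
lemma lab_inn' (z : Fin n) : lab e (.inr (.inr z)) = encN (e.2.2 z) := rfl

lemma labL_eq_iff (x : Fin l) (t : Fin b ⊕ (Fin c ⊕ Fin d)) :
    lab e (.inl x) = encL t ↔ e.1 x = t := by
  rcases h : e.1 x with j | j | j <;> rcases t with i | i | i <;>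
    simp [lab_inl', h, encL, ja, jb, jc, jd]

lemma labM_eq_iff (y : Fin m) (t : Fin a ⊕ (Fin c ⊕ Fin d)) :
    lab e (.inr (.inl y)) = encM t ↔ e.2.1 y = t := by
  rcases h : e.2.1 y with j | j | j <;> rcases t with i | i | i <;>
    simp [lab_inm', h, encM, ja, jb, jc, jd]

lemma labN_eq_iff (z : Fin n) (t : Fin a ⊕ (Fin b ⊕ Fin d)) :
    lab e (.inr (.inr z)) = encN t ↔ e.2.2 z = t := by
  rcases h : e.2.2 z with j | j | j <;> rcases t with i | i | i <;>
    simp [lab_inn', h, encN, ja, jb, jc, jd]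

abbrev GG (a b c d : ℕ) :=
  Equiv.Perm (Fin a) × Equiv.Perm (Fin b) × Equiv.Perm (Fin c) × Equiv.Perm (Fin d)

def sTl (g : GG a b c d) : (Fin b ⊕ (Fin c ⊕ Fin d)) ≃ (Fin b ⊕ (Fin c ⊕ Fin d)) :=
  Equiv.sumCongr g.2.1 (Equiv.sumCongr g.2.2.1 g.2.2.2)
def sTm (g : GG a b c d) : (Fin a ⊕ (Fin c ⊕ Fin d)) ≃ (Fin a ⊕ (Fin c ⊕ Fin d)) :=
  Equiv.sumCongr g.1 (Equiv.sumCongr g.2.2.1 g.2.2.2)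
def sTn (g : GG a b c d) : (Fin a ⊕ (Fin b ⊕ Fin d)) ≃ (Fin a ⊕ (Fin b ⊕ Fin d)) :=
  Equiv.sumCongr g.1 (Equiv.sumCongr g.2.1 g.2.2.2)
def sL (g : GG a b c d) : Lab a b c d ≃ Lab a b c d :=
  Equiv.sumCongr g.1 (Equiv.sumCongr g.2.1 (Equiv.sumCongr g.2.2.1 g.2.2.2))

def act (g : GG a b c d) (e : EE l m n a b c d) : EE l m n a b c d :=
  (e.1.trans (sTl g), e.2.1.trans (sTm g), e.2.2.trans (sTn g))

lemma sL_encL (g : GG a b c d) (t : Fin b ⊕ (Fin c ⊕ Fin d)) :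
    sL g (encL t) = encL (sTl g t) := by
  rcases t with i | i | i <;> simp [sL, sTl, encL, ja, jb, jc, jd]

lemma sL_encM (g : GG a b c d) (t : Fin a ⊕ (Fin c ⊕ Fin d)) :
    sL g (encM t) = encM (sTm g t) := by
  rcases t with i | i | i <;> simp [sL, sTm, encM, ja, jb, jc, jd]

lemma sL_encN (g : GG a b c d) (t : Fin a ⊕ (Fin b ⊕ Fin d)) :
    sL g (encN t) = encN (sTn g t) := by
  rcases t with i | i | i <;> simp [sL, sTn, encN, ja, jb, jc, jd]

lemma lab_act (g : GG a b c d) (u : Om l m n) :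
    lab (act g e) u = sL g (lab e u) := by
  rcases u with x | y | z
  · rw [lab_inl', lab_inl', sL_encL]; rfl
  · rw [lab_inm', lab_inm', sL_encM]; rfl
  · rw [lab_inn', lab_inn', sL_encN]; rfl

lemma ker_act (g : GG a b c d) :
    Setoid.ker (lab (act g e)) = Setoid.ker (lab e) := by
  apply Setoid.ext
  intro u v
  show lab (act g e) u = lab (act g e) v ↔ lab e u = lab e v
  rw [lab_act, lab_act]
  exact (sL g).injective.eq_iff

lemma act_injective (g g' : GG a b c d) (h : act g e = act g' e) : g = g' := by
  have h1 : ∀ t, sTl g t = sTl g' t := by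
    intro t
    have := congrArg (fun p => p.1 (e.1.symm t)) h
    simpa [act] using this
  have h2 : ∀ t, sTm g t = sTm g' t := by
    intro t
    have := congrArg (fun p => p.2.1 (e.2.1.symm t)) h
    simpa [act] using this
  obtain ⟨ga, gb, gc, gd⟩ := g
  obtain ⟨ga', gb', gc', gd'⟩ := g'
  refine Prod.ext ?_ (Prod.ext ?_ (Prod.ext ?_ ?_)) <;> apply Equiv.ext <;> intro i
  · simpa [sTm] using h2 (.inl i)
  · simpa [sTl] using h1 (.inl i)
  · simpa [sTl] using h1 (.inr (.inl i))
  · simpa [sTl] using h1 (.inr (.inr i))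

def hitL (e : EE l m n a b c d) (v : Lab a b c d) : Prop := ∃ x, lab e (.inl x) = v
def hitM (e : EE l m n a b c d) (v : Lab a b c d) : Prop := ∃ y, lab e (.inr (.inl y)) = v
def hitN (e : EE l m n a b c d) (v : Lab a b c d) : Prop := ∃ z, lab e (.inr (.inr z)) = v

lemma notHitL_iff (v : Lab a b c d) : ¬ hitL e v ↔ ∃ i, v = ja i := by
  constructor
  · intro h
    rcases v with i | i | i | i
    · exact ⟨i, rfl⟩
    · exact absurd ⟨e.1.symm (.inl i), by simp [lab_inl', encL, jb]⟩ h
    · exact absurd ⟨e.1.symm (.inr (.inl i)), by simp [lab_inl', encL, jc]⟩ h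
    · exact absurd ⟨e.1.symm (.inr (.inr i)), by simp [lab_inl', encL, jd]⟩ h
  · rintro ⟨i, rfl⟩ ⟨x, hx⟩
    exact labL_ne_ja e x i hx

lemma notHitM_iff (v : Lab a b c d) : ¬ hitM e v ↔ ∃ i, v = jb i := by
  constructor
  · intro h
    rcases v with i | i | i | i
    · exact absurd ⟨e.2.1.symm (.inl i), by simp [lab_inm', encM, ja]⟩ h
    · exact ⟨i, rfl⟩
    · exact absurd ⟨e.2.1.symm (.inr (.inl i)), by simp [lab_inm', encM, jc]⟩ h
    · exact absurd ⟨e.2.1.symm (.inr (.inr i)), by simp [lab_inm', encM, jd]⟩ h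
  · rintro ⟨i, rfl⟩ ⟨y, hy⟩
    exact labM_ne_jb e y i hy

lemma notHitN_iff (v : Lab a b c d) : ¬ hitN e v ↔ ∃ i, v = jc i := by
  constructor
  · intro h
    rcases v with i | i | i | i
    · exact absurd ⟨e.2.2.symm (.inl i), by simp [lab_inn', encN, ja]⟩ h
    · exact absurd ⟨e.2.2.symm (.inr (.inl i)), by simp [lab_inn', encN, jb]⟩ h
    · exact ⟨i, rfl⟩
    · exact absurd ⟨e.2.2.symm (.inr (.inr i)), by simp [lab_inn', encN, jd]⟩ h
  · rintro ⟨i, rfl⟩ ⟨z, hz⟩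
    exact labN_ne_jc e z i hz

lemma act_transitive (e' : EE l m n a b c d)
    (hker : Setoid.ker (lab e') = Setoid.ker (lab e)) : ∃ g, act g e = e' := by
  classical
  have hkr : ∀ u v : Om l m n, lab e u = lab e v ↔ lab e' u = lab e' v := by
    intro u v
    constructor
    · intro h
      exact (Setoid.ext_iff.mp hker u v).mpr h
    · intro h
      exact (Setoid.ext_iff.mp hker u v).mp h
  set sec : Lab a b c d → Om l m n := fun v => (lab_surjective e v).choose with hsec
  have hsec2 : ∀ v, lab e (sec v) = v := fun v => (lab_surjective e v).choose_spec
  set σ : Lab a b c d → Lab a b c d := fun v => lab e' (sec v) with hσdef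
  have hσ : ∀ u, σ (lab e u) = lab e' u := by
    intro u
    exact (hkr _ _).mp (hsec2 (lab e u))
  have hσinj : Function.Injective σ := by
    intro v w h
    rw [← hsec2 v, ← hsec2 w]
    exact (hkr _ _).mpr h
  -- σ preserves the four sorts
  have hhL : ∀ v, hitL e' (σ v) ↔ hitL e v := by
    intro v
    constructor
    · rintro ⟨x, hx⟩
      rw [← hσ (.inl x)] at hx
      exact ⟨x, hσinj hx⟩
    · rintro ⟨x, rfl⟩
      exact ⟨x, (hσ _).symm⟩
  have hhM : ∀ v, hitM e' (σ v) ↔ hitM e v := by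
    intro v
    constructor
    · rintro ⟨y, hy⟩
      rw [← hσ (.inr (.inl y))] at hy
      exact ⟨y, hσinj hy⟩
    · rintro ⟨y, rfl⟩
      exact ⟨y, (hσ _).symm⟩
  have hhN : ∀ v, hitN e' (σ v) ↔ hitN e v := by
    intro v
    constructor
    · rintro ⟨z, hz⟩
      rw [← hσ (.inr (.inr z))] at hz
      exact ⟨z, hσinj hz⟩
    · rintro ⟨z, rfl⟩
      exact ⟨z, (hσ _).symm⟩
  have hja : ∀ i : Fin a, ∃ i', σ (ja i) = ja i' := by
    intro i
    have : ¬ hitL e' (σ (ja i)) := by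
      rw [hhL]
      exact (notHitL_iff e _).mpr ⟨i, rfl⟩
    exact (notHitL_iff e' _).mp this
  have hjb : ∀ i : Fin b, ∃ i', σ (jb i) = jb i' := by
    intro i
    have : ¬ hitM e' (σ (jb i)) := by
      rw [hhM]
      exact (notHitM_iff e _).mpr ⟨i, rfl⟩
    exact (notHitM_iff e' _).mp this
  have hjc : ∀ i : Fin c, ∃ i', σ (jc i) = jc i' := by
    intro i
    have : ¬ hitN e' (σ (jc i)) := by
      rw [hhN]
      exact (notHitN_iff e _).mpr ⟨i, rfl⟩
    exact (notHitN_iff e' _).mp this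
  have hjd : ∀ i : Fin d, ∃ i', σ (jd i) = jd i' := by
    intro i
    have hL : hitL e' (σ (jd i)) := by
      rw [hhL]
      exact ⟨e.1.symm (.inr (.inr i)), by simp [lab_inl', encL, jd]⟩
    have hM : hitM e' (σ (jd i)) := by
      rw [hhM]
      exact ⟨e.2.1.symm (.inr (.inr i)), by simp [lab_inm', encM, jd]⟩
    have hN : hitN e' (σ (jd i)) := by
      rw [hhN]
      exact ⟨e.2.2.symm (.inr (.inr i)), by simp [lab_inn', encN, jd]⟩
    rcases h : σ (jd i) with i' | i' | i' | i'
    · exact absurd hL (by rw [h]; exact (notHitL_iff e' _).mpr ⟨i', rfl⟩)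
    · exact absurd hM (by rw [h]; exact (notHitM_iff e' _).mpr ⟨i', rfl⟩)
    · exact absurd hN (by rw [h]; exact (notHitN_iff e' _).mpr ⟨i', rfl⟩)
    · exact ⟨i', rfl⟩
  -- build the four permutations
  set fa : Fin a → Fin a := fun i => (hja i).choose with hfa
  have hfa2 : ∀ i, σ (ja i) = ja (fa i) := fun i => (hja i).choose_spec
  set fb : Fin b → Fin b := fun i => (hjb i).choose with hfb
  have hfb2 : ∀ i, σ (jb i) = jb (fb i) := fun i => (hjb i).choose_spec
  set fc : Fin c → Fin c := fun i => (hjc i).choose with hfc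
  have hfc2 : ∀ i, σ (jc i) = jc (fc i) := fun i => (hjc i).choose_spec
  set fd : Fin d → Fin d := fun i => (hjd i).choose with hfd
  have hfd2 : ∀ i, σ (jd i) = jd (fd i) := fun i => (hjd i).choose_spec
  have hfainj : Function.Injective fa := by
    intro i i' h
    have : σ (ja i) = σ (ja i') := by rw [hfa2, hfa2, h]
    simpa [ja] using hσinj this
  have hfbinj : Function.Injective fb := by
    intro i i' h
    have : σ (jb i) = σ (jb i') := by rw [hfb2, hfb2, h]
    simpa [jb] using hσinj this
  have hfcinj : Function.Injective fc := by
    intro i i' h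
    have : σ (jc i) = σ (jc i') := by rw [hfc2, hfc2, h]
    simpa [jc] using hσinj this
  have hfdinj : Function.Injective fd := by
    intro i i' h
    have : σ (jd i) = σ (jd i') := by rw [hfd2, hfd2, h]
    simpa [jd] using hσinj this
  set g : GG a b c d :=
    (Equiv.ofBijective fa (Finite.injective_iff_bijective.mp hfainj),
     Equiv.ofBijective fb (Finite.injective_iff_bijective.mp hfbinj),
     Equiv.ofBijective fc (Finite.injective_iff_bijective.mp hfcinj),
     Equiv.ofBijective fd (Finite.injective_iff_bijective.mp hfdinj)) with hg
  have hσg : ∀ v, σ v = sL g v := by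
    intro v
    rcases v with i | i | i | i
    · rw [show (Sum.inl i : Lab a b c d) = ja i from rfl, hfa2]
      simp [sL, hg, ja, Equiv.ofBijective]
    · rw [show (Sum.inr (Sum.inl i) : Lab a b c d) = jb i from rfl, hfb2]
      simp [sL, hg, jb, Equiv.ofBijective]
    · rw [show (Sum.inr (Sum.inr (Sum.inl i)) : Lab a b c d) = jc i from rfl, hfc2]
      simp [sL, hg, jc, Equiv.ofBijective]
    · rw [show (Sum.inr (Sum.inr (Sum.inr i)) : Lab a b c d) = jd i from rfl, hfd2]
      simp [sL, hg, jd, Equiv.ofBijective]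
  refine ⟨g, ?_⟩
  have key : ∀ u, lab e' u = sL g (lab e u) := by
    intro u
    rw [← hσg, hσ]
  refine Prod.ext ?_ (Prod.ext ?_ ?_)
  · apply Equiv.ext
    intro x
    show sTl g (e.1 x) = e'.1 x
    have := key (.inl x)
    rw [lab_inl', lab_inl', sL_encL] at this
    exact ((labL_eq_iff e' x _).mp (by rw [lab_inl']; exact this)).symm
  · apply Equiv.ext
    intro y
    show sTm g (e.2.1 y) = e'.2.1 y
    have := key (.inr (.inl y))
    rw [lab_inm', lab_inm', sL_encM] at this
    exact ((labM_eq_iff e' y _).mp (by rw [lab_inm']; exact this)).symm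
  · apply Equiv.ext
    intro z
    show sTn g (e.2.2 z) = e'.2.2 z
    have := key (.inr (.inr z))
    rw [lab_inn', lab_inn', sL_encN] at this
    exact ((labN_eq_iff e' z _).mp (by rw [lab_inn']; exact this)).symm

section Surj
attribute [local instance] Classical.propDecidable

lemma blockB_inl_unique {S : Set (Om l m n)} (h : BlockB l m n S) {x x' : Fin l}
    (hx : Sum.inl x ∈ S) (hx' : Sum.inl x' ∈ S) : x = x' := by
  obtain ⟨x0, z0, rfl⟩ := h; simp_all

lemma blockC_inl_unique {S : Set (Om l m n)} (h : BlockC l m n S) {x x' : Fin l}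
    (hx : Sum.inl x ∈ S) (hx' : Sum.inl x' ∈ S) : x = x' := by
  obtain ⟨x0, y0, rfl⟩ := h; simp_all

lemma blockD_inl_unique {S : Set (Om l m n)} (h : BlockD l m n S) {x x' : Fin l}
    (hx : Sum.inl x ∈ S) (hx' : Sum.inl x' ∈ S) : x = x' := by
  obtain ⟨x0, y0, z0, rfl⟩ := h; simp_all

lemma blockA_inm_unique {S : Set (Om l m n)} (h : BlockA l m n S) {y y' : Fin m}
    (hy : Sum.inr (Sum.inl y) ∈ S) (hy' : Sum.inr (Sum.inl y') ∈ S) : y = y' := by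
  obtain ⟨y0, z0, rfl⟩ := h; simp_all

lemma blockC_inm_unique {S : Set (Om l m n)} (h : BlockC l m n S) {y y' : Fin m}
    (hy : Sum.inr (Sum.inl y) ∈ S) (hy' : Sum.inr (Sum.inl y') ∈ S) : y = y' := by
  obtain ⟨x0, y0, rfl⟩ := h; simp_all

lemma blockD_inm_unique {S : Set (Om l m n)} (h : BlockD l m n S) {y y' : Fin m}
    (hy : Sum.inr (Sum.inl y) ∈ S) (hy' : Sum.inr (Sum.inl y') ∈ S) : y = y' := by
  obtain ⟨x0, y0, z0, rfl⟩ := h; simp_all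

lemma blockA_inn_unique {S : Set (Om l m n)} (h : BlockA l m n S) {z z' : Fin n}
    (hz : Sum.inr (Sum.inr z) ∈ S) (hz' : Sum.inr (Sum.inr z') ∈ S) : z = z' := by
  obtain ⟨y0, z0, rfl⟩ := h; simp_all

lemma blockB_inn_unique {S : Set (Om l m n)} (h : BlockB l m n S) {z z' : Fin n}
    (hz : Sum.inr (Sum.inr z) ∈ S) (hz' : Sum.inr (Sum.inr z') ∈ S) : z = z' := by
  obtain ⟨x0, z0, rfl⟩ := h; simp_all

lemma blockD_inn_unique {S : Set (Om l m n)} (h : BlockD l m n S) {z z' : Fin n}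
    (hz : Sum.inr (Sum.inr z) ∈ S) (hz' : Sum.inr (Sum.inr z') ∈ S) : z = z' := by
  obtain ⟨x0, y0, z0, rfl⟩ := h; simp_all

variable (π : Setoid (Om l m n))

def cls (u : Om l m n) : Set (Om l m n) := {w | π w u}

lemma cls_mem (u : Om l m n) : cls π u ∈ π.classes := ⟨u, rfl⟩

lemma mem_cls (u : Om l m n) : u ∈ cls π u := π.refl' u

lemma cls_eq_of_rel {u v : Om l m n} (h : π u v) : cls π u = cls π v := by
  ext w
  exact ⟨fun h' => π.trans' h' h, fun h' => π.trans' h' (π.symm' h)⟩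

lemma rel_of_cls_eq {u v : Om l m n} (h : cls π u = cls π v) : π u v := by
  have := mem_cls π u
  rw [h] at this
  exact this

lemma eq_cls_of_mem {S : Set (Om l m n)} {u : Om l m n} (hS : S ∈ π.classes)
    (hu : u ∈ S) : S = cls π u := by
  obtain ⟨y, rfl⟩ := hS
  ext w
  exact ⟨fun h' => π.trans' h' (π.symm' hu), fun h' => π.trans' h' hu⟩

lemma notA_of_B {S : Set (Om l m n)} (h : BlockB l m n S) : ¬ BlockA l m n S :=
  fun hA => blockA_not_inl hA _ (blockB_mem_inl h).choose_spec

lemma notA_of_C {S : Set (Om l m n)} (h : BlockC l m n S) : ¬ BlockA l m n S :=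
  fun hA => blockA_not_inl hA _ (blockC_mem_inl h).choose_spec

lemma notA_of_D {S : Set (Om l m n)} (h : BlockD l m n S) : ¬ BlockA l m n S :=
  fun hA => blockA_not_inl hA _ (blockD_mem_inl h).choose_spec

lemma notB_of_C {S : Set (Om l m n)} (h : BlockC l m n S) : ¬ BlockB l m n S :=
  fun hB => blockC_not_inn h _ (blockB_mem_inn hB).choose_spec

lemma notB_of_D {S : Set (Om l m n)} (h : BlockD l m n S) : ¬ BlockB l m n S :=
  fun hB => blockB_not_inm hB _ (blockD_mem_inm h).choose_spec

lemma notC_of_D {S : Set (Om l m n)} (h : BlockD l m n S) : ¬ BlockC l m n S :=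
  fun hC => blockC_not_inn hC _ (blockD_mem_inn h).choose_spec

variable (hall : ∀ B ∈ π.classes,
    BlockA l m n B ∨ BlockB l m n B ∨ BlockC l m n B ∨ BlockD l m n B)
variable (eA : {B | B ∈ π.classes ∧ BlockA l m n B} ≃ Fin a)
variable (eB : {B | B ∈ π.classes ∧ BlockB l m n B} ≃ Fin b)
variable (eC : {B | B ∈ π.classes ∧ BlockC l m n B} ≃ Fin c)
variable (eD : {B | B ∈ π.classes ∧ BlockD l m n B} ≃ Fin d)
include hall

def idxS : π.classes → Lab a b c d := fun S =>
  if hA : BlockA l m n S.1 then ja (eA ⟨S.1, S.2, hA⟩)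
  else if hB : BlockB l m n S.1 then jb (eB ⟨S.1, S.2, hB⟩)
  else if hC : BlockC l m n S.1 then jc (eC ⟨S.1, S.2, hC⟩)
  else jd (eD ⟨S.1, S.2, by
    rcases hall S.1 S.2 with h | h | h | h
    · exact absurd h hA
    · exact absurd h hB
    · exact absurd h hC
    · exact h⟩)

lemma idxS_of_A {S : π.classes} (h : BlockA l m n S.1) :
    idxS π hall eA eB eC eD S = ja (eA ⟨S.1, S.2, h⟩) := dif_pos h

lemma idxS_of_B {S : π.classes} (h : BlockB l m n S.1) :
    idxS π hall eA eB eC eD S = jb (eB ⟨S.1, S.2, h⟩) := by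
  unfold idxS
  rw [dif_neg (notA_of_B h), dif_pos h]

lemma idxS_of_C {S : π.classes} (h : BlockC l m n S.1) :
    idxS π hall eA eB eC eD S = jc (eC ⟨S.1, S.2, h⟩) := by
  unfold idxS
  rw [dif_neg (notA_of_C h), dif_neg (notB_of_C h), dif_pos h]

lemma idxS_of_D {S : π.classes} (h : BlockD l m n S.1) :
    idxS π hall eA eB eC eD S = jd (eD ⟨S.1, S.2, h⟩) := by
  unfold idxS
  rw [dif_neg (notA_of_D h), dif_neg (notB_of_D h), dif_neg (notC_of_D h)]

def clsOf : Lab a b c d → Set (Om l m n) :=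
  Sum.elim (fun i => (eA.symm i).1)
    (Sum.elim (fun i => (eB.symm i).1)
      (Sum.elim (fun i => (eC.symm i).1) (fun i => (eD.symm i).1)))

lemma clsOf_idxS (S : π.classes) :
    clsOf π eA eB eC eD (idxS π hall eA eB eC eD S) = S.1 := by
  rcases hall S.1 S.2 with h | h | h | h
  · rw [idxS_of_A π hall eA eB eC eD h]
    simp [clsOf, ja]
  · rw [idxS_of_B π hall eA eB eC eD h]
    simp [clsOf, jb]
  · rw [idxS_of_C π hall eA eB eC eD h]
    simp [clsOf, jc]
  · rw [idxS_of_D π hall eA eB eC eD h]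
    simp [clsOf, jd]

lemma idxS_inj : Function.Injective (idxS π hall eA eB eC eD) := by
  intro S S' h
  have := congrArg (clsOf π eA eB eC eD) h
  rw [clsOf_idxS, clsOf_idxS] at this
  exact Subtype.ext this

lemma inl_unique_in_class {S : Set (Om l m n)} (hS : S ∈ π.classes) {x x' : Fin l}
    (hx : Sum.inl x ∈ S) (hx' : Sum.inl x' ∈ S) : x = x' := by
  rcases hall S hS with h | h | h | h
  · exact absurd hx (blockA_not_inl h x)
  · exact blockB_inl_unique h hx hx'
  · exact blockC_inl_unique h hx hx'
  · exact blockD_inl_unique h hx hx'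

lemma inm_unique_in_class {S : Set (Om l m n)} (hS : S ∈ π.classes) {y y' : Fin m}
    (hy : Sum.inr (Sum.inl y) ∈ S) (hy' : Sum.inr (Sum.inl y') ∈ S) : y = y' := by
  rcases hall S hS with h | h | h | h
  · exact blockA_inm_unique h hy hy'
  · exact absurd hy (blockB_not_inm h y)
  · exact blockC_inm_unique h hy hy'
  · exact blockD_inm_unique h hy hy'

lemma inn_unique_in_class {S : Set (Om l m n)} (hS : S ∈ π.classes) {z z' : Fin n}
    (hz : Sum.inr (Sum.inr z) ∈ S) (hz' : Sum.inr (Sum.inr z') ∈ S) : z = z' := by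
  rcases hall S hS with h | h | h | h
  · exact blockA_inn_unique h hz hz'
  · exact blockB_inn_unique h hz hz'
  · exact absurd hz (blockC_not_inn h z)
  · exact blockD_inn_unique h hz hz'

def fL : Fin l → Fin b ⊕ (Fin c ⊕ Fin d) := fun x =>
  if hB : BlockB l m n (cls π (.inl x)) then .inl (eB ⟨_, cls_mem π _, hB⟩)
  else if hC : BlockC l m n (cls π (.inl x)) then .inr (.inl (eC ⟨_, cls_mem π _, hC⟩))
  else .inr (.inr (eD ⟨_, cls_mem π _, by
    rcases hall _ (cls_mem π (.inl x)) with h | h | h | h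
    · exact absurd (mem_cls π (.inl x)) (blockA_not_inl h x)
    · exact absurd h hB
    · exact absurd h hC
    · exact h⟩))

def fM : Fin m → Fin a ⊕ (Fin c ⊕ Fin d) := fun y =>
  if hA : BlockA l m n (cls π (.inr (.inl y))) then .inl (eA ⟨_, cls_mem π _, hA⟩)
  else if hC : BlockC l m n (cls π (.inr (.inl y))) then
    .inr (.inl (eC ⟨_, cls_mem π _, hC⟩))
  else .inr (.inr (eD ⟨_, cls_mem π _, by
    rcases hall _ (cls_mem π (.inr (.inl y))) with h | h | h | h
    · exact absurd h hA
    · exact absurd (mem_cls π (.inr (.inl y))) (blockB_not_inm h y)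
    · exact absurd h hC
    · exact h⟩))

def fN : Fin n → Fin a ⊕ (Fin b ⊕ Fin d) := fun z =>
  if hA : BlockA l m n (cls π (.inr (.inr z))) then .inl (eA ⟨_, cls_mem π _, hA⟩)
  else if hB : BlockB l m n (cls π (.inr (.inr z))) then
    .inr (.inl (eB ⟨_, cls_mem π _, hB⟩))
  else .inr (.inr (eD ⟨_, cls_mem π _, by
    rcases hall _ (cls_mem π (.inr (.inr z))) with h | h | h | h
    · exact absurd h hA
    · exact absurd h hB
    · exact absurd (mem_cls π (.inr (.inr z))) (blockC_not_inn h z)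
    · exact h⟩))

lemma encL_fL (x : Fin l) :
    encL (fL π hall eB eC eD x)
      = idxS π hall eA eB eC eD ⟨cls π (.inl x), cls_mem π _⟩ := by
  have hA : ¬ BlockA l m n (cls π (.inl x)) :=
    fun h => blockA_not_inl h x (mem_cls π _)
  unfold fL idxS
  rw [dif_neg hA]
  split_ifs with hB hC <;> simp [encL, ja, jb, jc, jd]

lemma encM_fM (y : Fin m) :
    encM (fM π hall eA eC eD y)
      = idxS π hall eA eB eC eD ⟨cls π (.inr (.inl y)), cls_mem π _⟩ := by
  have hB : ¬ BlockB l m n (cls π (.inr (.inl y))) :=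
    fun h => blockB_not_inm h y (mem_cls π _)
  unfold fM idxS
  by_cases hA : BlockA l m n (cls π (.inr (.inl y)))
  · rw [dif_pos hA, dif_pos hA]
    simp [encM, ja]
  · rw [dif_neg hA, dif_neg hA, dif_neg hB]
    split_ifs with hC <;> simp [encM, ja, jb, jc, jd]

lemma encN_fN (z : Fin n) :
    encN (fN π hall eA eB eD z)
      = idxS π hall eA eB eC eD ⟨cls π (.inr (.inr z)), cls_mem π _⟩ := by
  have hC : ¬ BlockC l m n (cls π (.inr (.inr z))) :=
    fun h => blockC_not_inn h z (mem_cls π _)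
  unfold fN idxS
  by_cases hA : BlockA l m n (cls π (.inr (.inr z)))
  · rw [dif_pos hA, dif_pos hA]
    simp [encN, ja]
  · rw [dif_neg hA, dif_neg hA]
    by_cases hB : BlockB l m n (cls π (.inr (.inr z)))
    · rw [dif_pos hB, dif_pos hB]
      simp [encN, jb]
    · rw [dif_neg hB, dif_neg hB, dif_neg hC]
      simp [encN, jd]

lemma fL_inj (eA : {B | B ∈ π.classes ∧ BlockA l m n B} ≃ Fin a) :
    Function.Injective (fL π hall eB eC eD) := by
  intro x x' h
  have h2 := congrArg (encL (a := a)) h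
  rw [encL_fL π hall eA eB eC eD, encL_fL π hall eA eB eC eD] at h2
  have h3 := idxS_inj π hall eA eB eC eD h2
  have h4 : cls π (.inl x) = cls π (.inl x') := congrArg Subtype.val h3
  have h5 : (Sum.inl x : Om l m n) ∈ cls π (.inl x') := by
    rw [← h4]; exact mem_cls π _
  exact inl_unique_in_class π hall (cls_mem π _) h5 (mem_cls π _)

lemma fM_inj (eB : {B | B ∈ π.classes ∧ BlockB l m n B} ≃ Fin b) :
    Function.Injective (fM π hall eA eC eD) := by
  intro y y' h
  have h2 := congrArg (encM (b := b)) h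
  rw [encM_fM π hall eA eB eC eD, encM_fM π hall eA eB eC eD] at h2
  have h3 := idxS_inj π hall eA eB eC eD h2
  have h4 : cls π (.inr (.inl y)) = cls π (.inr (.inl y')) := congrArg Subtype.val h3
  have h5 : (Sum.inr (Sum.inl y) : Om l m n) ∈ cls π (.inr (.inl y')) := by
    rw [← h4]; exact mem_cls π _
  exact inm_unique_in_class π hall (cls_mem π _) h5 (mem_cls π _)

lemma fN_inj (eC : {B | B ∈ π.classes ∧ BlockC l m n B} ≃ Fin c) :
    Function.Injective (fN π hall eA eB eD) := by
  intro z z' h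
  have h2 := congrArg (encN (c := c)) h
  rw [encN_fN π hall eA eB eC eD, encN_fN π hall eA eB eC eD] at h2
  have h3 := idxS_inj π hall eA eB eC eD h2
  have h4 : cls π (.inr (.inr z)) = cls π (.inr (.inr z')) := congrArg Subtype.val h3
  have h5 : (Sum.inr (Sum.inr z) : Om l m n) ∈ cls π (.inr (.inr z')) := by
    rw [← h4]; exact mem_cls π _
  exact inn_unique_in_class π hall (cls_mem π _) h5 (mem_cls π _)

omit hall in
lemma exists_preimage (h1 : b + c + d = l) (h2 : a + c + d = m) (h3 : a + b + d = n)
    (hall : ∀ B ∈ π.classes,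
      BlockA l m n B ∨ BlockB l m n B ∨ BlockC l m n B ∨ BlockD l m n B)
    (hA : {B | B ∈ π.classes ∧ BlockA l m n B}.ncard = a)
    (hB : {B | B ∈ π.classes ∧ BlockB l m n B}.ncard = b)
    (hC : {B | B ∈ π.classes ∧ BlockC l m n B}.ncard = c)
    (hD : {B | B ∈ π.classes ∧ BlockD l m n B}.ncard = d) :
    ∃ e : EE l m n a b c d, Setoid.ker (lab e) = π := by
  classical
  let eA : {B | B ∈ π.classes ∧ BlockA l m n B} ≃ Fin a :=
    Finite.equivFinOfCardEq (by rw [Nat.card_coe_set_eq]; exact hA)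
  let eB : {B | B ∈ π.classes ∧ BlockB l m n B} ≃ Fin b :=
    Finite.equivFinOfCardEq (by rw [Nat.card_coe_set_eq]; exact hB)
  let eC : {B | B ∈ π.classes ∧ BlockC l m n B} ≃ Fin c :=
    Finite.equivFinOfCardEq (by rw [Nat.card_coe_set_eq]; exact hC)
  let eD : {B | B ∈ π.classes ∧ BlockD l m n B} ≃ Fin d :=
    Finite.equivFinOfCardEq (by rw [Nat.card_coe_set_eq]; exact hD)
  let pL : Fin l ≃ (Fin b ⊕ (Fin c ⊕ Fin d)) :=
    Equiv.ofBijective (fL π hall eB eC eD)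
      ((Fintype.bijective_iff_injective_and_card _).mpr
        ⟨fL_inj π hall eB eC eD eA, by simp; omega⟩)
  let pM : Fin m ≃ (Fin a ⊕ (Fin c ⊕ Fin d)) :=
    Equiv.ofBijective (fM π hall eA eC eD)
      ((Fintype.bijective_iff_injective_and_card _).mpr
        ⟨fM_inj π hall eA eC eD eB, by simp; omega⟩)
  let pN : Fin n ≃ (Fin a ⊕ (Fin b ⊕ Fin d)) :=
    Equiv.ofBijective (fN π hall eA eB eD)
      ((Fintype.bijective_iff_injective_and_card _).mpr
        ⟨fN_inj π hall eA eB eD eC, by simp; omega⟩)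
  refine ⟨(pL, pM, pN), ?_⟩
  have hlab : ∀ u, lab ((pL, pM, pN) : EE l m n a b c d) u
      = idxS π hall eA eB eC eD ⟨cls π u, cls_mem π u⟩ := by
    rintro (x | y | z)
    · rw [lab_inl']
      exact encL_fL π hall eA eB eC eD x
    · rw [lab_inm']
      exact encM_fM π hall eA eB eC eD y
    · rw [lab_inn']
      exact encN_fN π hall eA eB eC eD z
  apply Setoid.ext
  intro u v
  show lab ((pL, pM, pN) : EE l m n a b c d) u = lab ((pL, pM, pN) : EE l m n a b c d) v
      ↔ π u v
  rw [hlab u, hlab v]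
  constructor
  · intro h
    exact rel_of_cls_eq π (congrArg Subtype.val (idxS_inj π hall eA eB eC eD h))
  · intro h
    exact congrArg (idxS π hall eA eB eC eD) (Subtype.ext (cls_eq_of_rel π h))

end Surj

end Stmt18Aux

open Stmt18Aux

/-- The number of set partitions of `Fin l ⊕ Fin m ⊕ Fin n` (encoded as equivalence
relations, with blocks the equivalence classes) all of whose blocks have one of the four
listed forms, with exactly `a`, `b`, `c`, `d` blocks of the respective forms, equals
`l!·m!·n!/(a!·b!·c!·d!)` (stated multiplicatively). -/
theorem stmt18 (l m n a b c d : ℕ) (h1 : b + c + d = l) (h2 : a + c + d = m)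
    (h3 : a + b + d = n) :
    Nat.card {π : Setoid (Fin l ⊕ Fin m ⊕ Fin n) //
        (∀ B ∈ π.classes, BlockA l m n B ∨ BlockB l m n B ∨ BlockC l m n B ∨ BlockD l m n B) ∧
        {B | B ∈ π.classes ∧ BlockA l m n B}.ncard = a ∧
        {B | B ∈ π.classes ∧ BlockB l m n B}.ncard = b ∧
        {B | B ∈ π.classes ∧ BlockC l m n B}.ncard = c ∧
        {B | B ∈ π.classes ∧ BlockD l m n B}.ncard = d} *
      (a.factorial * b.factorial * c.factorial * d.factorial)
      = l.factorial * m.factorial * n.factorial := by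
  classical
  let T := {π : Setoid (Fin l ⊕ Fin m ⊕ Fin n) //
        (∀ B ∈ π.classes, BlockA l m n B ∨ BlockB l m n B ∨ BlockC l m n B ∨ BlockD l m n B) ∧
        {B | B ∈ π.classes ∧ BlockA l m n B}.ncard = a ∧
        {B | B ∈ π.classes ∧ BlockB l m n B}.ncard = b ∧
        {B | B ∈ π.classes ∧ BlockC l m n B}.ncard = c ∧
        {B | B ∈ π.classes ∧ BlockD l m n B}.ncard = d}
  show Nat.card T * (a.factorial * b.factorial * c.factorial * d.factorial)
      = l.factorial * m.factorial * n.factorial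
  let Φ : EE l m n a b c d → T := fun e =>
    ⟨Setoid.ker (lab e), ker_blocks e, countA e, countB e, countC e, countD e⟩
  have hsurj : ∀ t : T, ∃ e, Φ e = t := by
    intro t
    obtain ⟨e, he⟩ := exists_preimage t.1 h1 h2 h3 t.2.1 t.2.2.1 t.2.2.2.1
      t.2.2.2.2.1 t.2.2.2.2.2
    exact ⟨e, Subtype.ext he⟩
  have fibEquiv : ∀ t : T, Nonempty ({e // Φ e = t} ≃ GG a b c d) := by
    intro t
    obtain ⟨e0, he0⟩ := hsurj t
    have hmem : ∀ g : GG a b c d, Φ (act g e0) = t := by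
      intro g
      rw [← he0]
      apply Subtype.ext
      show Setoid.ker (lab (act g e0)) = Setoid.ker (lab e0)
      exact ker_act e0 g
    refine ⟨(Equiv.ofBijective (fun g => ⟨act g e0, hmem g⟩) ⟨?_, ?_⟩).symm⟩
    · intro g g' hgg
      exact act_injective e0 g g' (congrArg Subtype.val hgg)
    · rintro ⟨e', he'⟩
      have hker : Setoid.ker (lab e') = Setoid.ker (lab e0) := by
        have h' := congrArg Subtype.val he'
        have h0 := congrArg Subtype.val he0
        show _ = _
        rw [show Setoid.ker (lab e') = t.1 from h', show Setoid.ker (lab e0) = t.1 from h0]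
      obtain ⟨g, hg⟩ := act_transitive e0 e' hker
      exact ⟨g, Subtype.ext hg⟩
  have hEq : Nat.card (EE l m n a b c d) = Nat.card T * Nat.card (GG a b c d) := by
    have e1 : EE l m n a b c d ≃ (t : T) × {e // Φ e = t} := (Equiv.sigmaFiberEquiv Φ).symm
    have e2 : ((t : T) × {e // Φ e = t}) ≃ (T × GG a b c d) :=
      (Equiv.sigmaCongrRight fun t => (fibEquiv t).some).trans
        (Equiv.sigmaEquivProd T (GG a b c d))
    rw [Nat.card_congr (e1.trans e2), Nat.card_prod]
  have hG : Nat.card (GG a b c d)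
      = a.factorial * b.factorial * c.factorial * d.factorial := by
    rw [Nat.card_eq_fintype_card]
    simp [Fintype.card_perm]
    ring
  have hE : Nat.card (EE l m n a b c d)
      = l.factorial * m.factorial * n.factorial := by
    have c1 : Fintype.card (Fin l ≃ (Fin b ⊕ (Fin c ⊕ Fin d))) = l.factorial := by
      rw [Fintype.card_equiv (Fintype.equivOfCardEq (by simp; omega))]
      simp
    have c2 : Fintype.card (Fin m ≃ (Fin a ⊕ (Fin c ⊕ Fin d))) = m.factorial := by
      rw [Fintype.card_equiv (Fintype.equivOfCardEq (by simp; omega))]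
      simp
    have c3 : Fintype.card (Fin n ≃ (Fin a ⊕ (Fin b ⊕ Fin d))) = n.factorial := by
      rw [Fintype.card_equiv (Fintype.equivOfCardEq (by simp; omega))]
      simp
    rw [Nat.card_eq_fintype_card]
    rw [show Fintype.card (EE l m n a b c d)
        = Fintype.card (Fin l ≃ (Fin b ⊕ (Fin c ⊕ Fin d)))
          * (Fintype.card (Fin m ≃ (Fin a ⊕ (Fin c ⊕ Fin d)))
            * Fintype.card (Fin n ≃ (Fin a ⊕ (Fin b ⊕ Fin d)))) from by
      rw [Fintype.card_prod, Fintype.card_prod]]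
    rw [c1, c2, c3, mul_assoc]
  rw [← hG, ← hEq, hE]
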